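/- Let X : [0,∞) → ℝ be locally Hölder continuous with exponent γ ∈ (1/2,1], X_0 = 0, and fix r₀ < 0. Then there exists a unique continuous function p : [0,∞) → ℝ with p(0) = 0 satisfying the Volterra integral equation p(t) = −∂_x G(X_t,t;r₀,0) + ∫₀ᵗ ∂_x G(X_t,t;X_τ,τ) p(τ) dτ for all t > 0. -/
import Mathlib


open MeasureTheory Filter Set

/-- The heat kernel G(x,t;ξ,s) = (2π(t−s))^{−1/2} exp(−(x−ξ)²/(2(t−s))) for
the equation v_t = ½ v_{xx}. -/
noncomputable def heatG (x t ξ s : ℝ) : ℝ :=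
  (Real.sqrt (2 * Real.pi * (t - s)))⁻¹ * Real.exp (-(x - ξ) ^ 2 / (2 * (t - s)))

/-- The spatial derivative ∂_x G(x,t;ξ,s) = −(x−ξ)/(t−s) · G(x,t;ξ,s). -/
noncomputable def heatGx (x t ξ s : ℝ) : ℝ :=
  -((x - ξ) / (t - s)) * heatG x t ξ s

noncomputable def volK (X : ℝ → ℝ) (t s : ℝ) : ℝ := heatGx (X t) t (X (t - s)) (t - s)

noncomputable def volF (X : ℝ → ℝ) (lam : ℝ) (u : ℝ → ℝ) (t : ℝ) : ℝ :=
  ∫ s in Set.Ioo 0 t, Real.exp (-lam * s) * (volK X t s * u (t - s))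

theorem cov (f : ℝ → ℝ) (t : ℝ) (ht : 0 < t) : ∫ τ in Set.Ioo 0 t, f τ = ∫ s in Set.Ioo 0 t, f (t - s) := by
  rw [← MeasureTheory.integral_Ioc_eq_integral_Ioo, ← MeasureTheory.integral_Ioc_eq_integral_Ioo,
    ← intervalIntegral.integral_of_le ht.le, ← intervalIntegral.integral_of_le ht.le]
  rw [intervalIntegral.integral_comp_sub_left f t]
  simp

theorem kbound {x ξ t τ M γ : ℝ} (h : 0 < t - τ) (hb : |x - ξ| ≤ M * (t - τ) ^ γ) :
    |heatGx x t ξ τ| ≤ (M / Real.sqrt (2 * Real.pi)) * (t - τ) ^ (γ - 3/2) := by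
  set s := t - τ with hs
  have hπ : (0:ℝ) < Real.sqrt (2 * Real.pi) := Real.sqrt_pos.2 (by positivity)
  have hexp : Real.exp (-(x - ξ) ^ 2 / (2 * s)) ≤ 1 := by
    rw [Real.exp_le_one_iff]
    apply div_nonpos_of_nonpos_of_nonneg
    · nlinarith [sq_nonneg (x-ξ)]
    · positivity
  have h1 : |heatGx x t ξ τ| = |x - ξ| / s * ((Real.sqrt (2 * Real.pi) * Real.sqrt s)⁻¹ *
      Real.exp (-(x - ξ) ^ 2 / (2 * s))) := by
    rw [heatGx, heatG, ← hs, ← Real.sqrt_mul (by positivity) s]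
    rw [abs_mul, abs_neg, abs_div, abs_of_pos h]
    congr 1
    rw [abs_mul]
    rw [abs_of_nonneg (by positivity), abs_of_nonneg (Real.exp_pos _).le]
  rw [h1]
  have hM : 0 ≤ M * s ^ γ := le_trans (abs_nonneg _) hb
  calc |x - ξ| / s * ((Real.sqrt (2 * Real.pi) * Real.sqrt s)⁻¹ * Real.exp (-(x - ξ) ^ 2 / (2 * s)))
      ≤ (M * s ^ γ) / s * ((Real.sqrt (2 * Real.pi) * Real.sqrt s)⁻¹ * 1) := by
        apply mul_le_mul
        · gcongr
        · exact mul_le_mul_of_nonneg_left hexp (by positivity)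
        · positivity
        · positivity
    _ = (M / Real.sqrt (2 * Real.pi)) * s ^ (γ - 3/2) := by
        rw [mul_one]
        rw [show M * s ^ γ / s = M * s ^ (γ - 1) by rw [Real.rpow_sub h, Real.rpow_one]; ring]
        simp only [Real.sqrt_eq_rpow]
        rw [show ((2*Real.pi) ^ ((1:ℝ)/2) * s ^ ((1:ℝ)/2))⁻¹ = ((2*Real.pi) ^ ((1:ℝ)/2))⁻¹ * (s ^ ((1:ℝ)/2))⁻¹ by rw [mul_inv]]
        rw [← Real.rpow_neg h.le]
        rw [show M * s ^ (γ-1) * (((2*Real.pi) ^ ((1:ℝ)/2))⁻¹ * s ^ (-((1:ℝ)/2))) =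
          (M / (2*Real.pi) ^ ((1:ℝ)/2)) * (s ^ (γ-1) * s ^ (-((1:ℝ)/2))) by ring]
        rw [← Real.rpow_add h, show γ - 1 + -((1:ℝ)/2) = γ - 3/2 by ring]

theorem gtend (X : ℝ → ℝ) (hX0 : X 0 = 0) (hXcont : ContinuousOn X (Set.Ici 0))
    (r₀ : ℝ) (hr₀ : r₀ < 0) :
    Tendsto (fun t => heatGx (X t) t r₀ 0) (nhdsWithin 0 (Set.Ioi 0)) (nhds 0) := by
  set c : ℝ := r₀ ^ 2 / 8 with hc
  have hcpos : 0 < c := by nlinarith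
  set B : ℝ := -2 * r₀ with hB
  -- reduce to the bound
  rw [tendsto_zero_iff_abs_tendsto_zero]
  have hlim : Tendsto (fun t : ℝ => B * ((t⁻¹) ^ ((3:ℝ)/2) * Real.exp (-c * t⁻¹)))
      (nhdsWithin 0 (Set.Ioi 0)) (nhds 0) := by
    have h1 : Tendsto (fun y : ℝ => B * (y ^ ((3:ℝ)/2) * Real.exp (-c * y))) atTop (nhds 0) := by
      have := (tendsto_rpow_mul_exp_neg_mul_atTop_nhds_zero ((3:ℝ)/2) c hcpos).const_mul B
      simpa using this
    exact h1.comp tendsto_inv_nhdsGT_zero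
  apply squeeze_zero' (by filter_upwards with t using abs_nonneg _) _ hlim
  -- the eventual bound
  have hXt : Tendsto X (nhdsWithin 0 (Set.Ioi 0)) (nhds 0) := by
    have := (hXcont 0 (Set.self_mem_Ici)).tendsto
    rw [hX0] at this
    exact this.mono_left (nhdsWithin_mono 0 (Set.Ioi_subset_Ici le_rfl))
  have hev : ∀ᶠ t in nhdsWithin 0 (Set.Ioi 0), |X t| ≤ -r₀ / 2 := by
    have : Set.Icc (r₀/2) (-r₀/2) ∈ nhds (0:ℝ) := by
      apply Icc_mem_nhds <;> linarith
    filter_upwards [hXt this] with t ht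
    rw [abs_le]; exact ⟨by linarith [ht.1], by linarith [ht.2]⟩
  filter_upwards [hev, self_mem_nhdsWithin] with t hXb (ht : 0 < t)
  -- now the pointwise bound
  have h1 : X t - r₀ ≥ -r₀/2 := by
    have := abs_le.1 hXb
    linarith [this.1]
  have h2 : |X t - r₀| ≤ B := by
    rw [abs_of_pos (by linarith)]
    have := abs_le.1 hXb
    linarith [this.2]
  have hsq : (X t - r₀)^2 ≥ r₀^2/4 := by nlinarith
  have hexp : Real.exp (-(X t - r₀) ^ 2 / (2 * t)) ≤ Real.exp (-c * t⁻¹) := by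
    apply Real.exp_le_exp.2
    have e : -c * t⁻¹ = (-(r₀^2/4)) / (2*t) := by field_simp; ring
    rw [e]
    gcongr
    all_goals linarith
  have hsqrt : (Real.sqrt (2 * Real.pi * t))⁻¹ ≤ (Real.sqrt t)⁻¹ := by
    apply inv_anti₀ (Real.sqrt_pos.2 ht)
    apply Real.sqrt_le_sqrt
    nlinarith [Real.pi_gt_three]
  have habs : |heatGx (X t) t r₀ 0| =
      |X t - r₀| / t * ((Real.sqrt (2 * Real.pi * t))⁻¹ * Real.exp (-(X t - r₀) ^ 2 / (2 * t))) := by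
    rw [heatGx, heatG]
    simp only [sub_zero]
    rw [abs_mul, abs_neg, abs_div, abs_of_pos ht, abs_mul,
      abs_of_nonneg (by positivity : (0:ℝ) ≤ (Real.sqrt (2 * Real.pi * t))⁻¹),
      abs_of_nonneg (Real.exp_pos _).le]
  show |heatGx (X t) t r₀ 0| ≤ _
  rw [habs]
  have e1 : (t⁻¹) ^ ((3:ℝ)/2) = t⁻¹ * (Real.sqrt t)⁻¹ := by
    rw [Real.inv_rpow ht.le, Real.sqrt_eq_rpow, ← Real.rpow_neg ht.le, ← Real.rpow_neg_one t,
      ← Real.rpow_neg ht.le, ← Real.rpow_add ht]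
    norm_num
  calc |X t - r₀| / t * ((Real.sqrt (2 * Real.pi * t))⁻¹ * Real.exp (-(X t - r₀) ^ 2 / (2 * t)))
      ≤ B / t * ((Real.sqrt t)⁻¹ * Real.exp (-c * t⁻¹)) := by
        have hB0 : (0:ℝ) ≤ B := by simp only [hB]; linarith
        apply mul_le_mul
        · gcongr
        · exact mul_le_mul hsqrt hexp (Real.exp_pos _).le (by positivity)
        · positivity
        · positivity
    _ = B * ((t⁻¹) ^ ((3:ℝ)/2) * Real.exp (-c * t⁻¹)) := by
        rw [e1]; ring

section core
variable {X : ℝ → ℝ} {γ T M lam : ℝ}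

theorem volK_bound (hT : 0 < T)
    (hHol : ∀ s ∈ Set.Icc (0:ℝ) T, ∀ u ∈ Set.Icc (0:ℝ) T, |X u - X s| ≤ M * |u - s| ^ γ)
    {t s : ℝ} (ht : t ∈ Set.Icc 0 T) (hs : s ∈ Set.Ioo 0 t) :
    |volK X t s| ≤ (M / Real.sqrt (2 * Real.pi)) * s ^ (γ - 3/2) := by
  have h1 : (0:ℝ) < t - (t - s) := by simp [hs.1]
  have hts : t - s ∈ Set.Icc (0:ℝ) T := ⟨by linarith [hs.1, hs.2], by linarith [ht.2, hs.1]⟩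
  have hb := hHol (t - s) hts t ht
  rw [show t - (t - s) = s by ring] at hb h1
  rw [abs_of_pos h1] at hb
  have h3 := kbound (x := X t) (ξ := X (t - s)) (t := t) (τ := t - s) (by linarith) (by rw [show t - (t-s) = s by ring]; exact hb)
  rw [show t - (t-s) = s by ring] at h3
  exact h3

theorem volK_contOn_s (hXcont : ContinuousOn X (Set.Ici 0)) {u : ℝ → ℝ} (hu : Continuous u)
    (t : ℝ) :
    ContinuousOn (fun s => Real.exp (-lam * s) * (volK X t s * u (t - s))) (Set.Ioo 0 t) := by
  intro s₀ hs₀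
  apply ContinuousAt.continuousWithinAt
  have hx : ContinuousAt (fun s : ℝ => X (t - s)) s₀ := by
    have h1 : ContinuousAt X (t - s₀) := hXcont.continuousAt (Ici_mem_nhds (by linarith [hs₀.1, hs₀.2]))
    exact h1.comp (by fun_prop)
  have hne : (fun s : ℝ => t - (t - s)) = fun s : ℝ => s := by ext s; ring
  simp only [volK, heatGx, heatG, hne]
  have hd : ContinuousAt (fun s : ℝ => -((X t - X (t - s)) / (t - (t - s)))) s₀ := by
    simp only [show ∀ s : ℝ, t - (t - s) = s from fun s => by ring]
    exact ((continuousAt_const.sub hx).div continuousAt_id (ne_of_gt hs₀.1)).neg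
  have hsq : ContinuousAt (fun s : ℝ => (Real.sqrt (2 * Real.pi * (t - (t - s))))⁻¹) s₀ := by
    simp only [show ∀ s : ℝ, t - (t - s) = s from fun s => by ring]
    apply ContinuousAt.inv₀
    · exact (Real.continuous_sqrt.comp (continuous_const.mul continuous_id)).continuousAt
    · exact ne_of_gt (Real.sqrt_pos.2 (by have := Real.pi_pos; nlinarith [hs₀.1]))
  have he : ContinuousAt (fun s : ℝ => Real.exp (-(X t - X (t - s)) ^ 2 / (2 * (t - (t - s))))) s₀ := by
    simp only [show ∀ s : ℝ, t - (t - s) = s from fun s => by ring]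
    apply Real.continuous_exp.continuousAt.comp
    exact ((continuousAt_const.sub hx).pow 2).neg.div (continuous_const.mul continuous_id).continuousAt (by simp [ne_of_gt hs₀.1])
  have hus : ContinuousAt (fun s : ℝ => u (t - s)) s₀ := hu.continuousAt.comp (by fun_prop)
  exact ((Real.continuous_exp.comp (by fun_prop)).continuousAt).mul ((hd.mul (hsq.mul he)).mul hus)

theorem rpow_int (hγ : 1/2 < γ) (t : ℝ) :
    IntegrableOn (fun s : ℝ => s ^ (γ - 3/2)) (Set.Ioo 0 t) := by
  have := intervalIntegral.intervalIntegrable_rpow' (a := 0) (b := t) (r := γ - 3/2) (by linarith)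
  exact (this.1).mono_set Set.Ioo_subset_Ioc_self

theorem volF_integrable (hγ : 1/2 < γ) (hT : 0 < T) (hlam : 0 ≤ lam)
    (hXcont : ContinuousOn X (Set.Ici 0))
    (hHol : ∀ s ∈ Set.Icc (0:ℝ) T, ∀ u ∈ Set.Icc (0:ℝ) T, |X u - X s| ≤ M * |u - s| ^ γ)
    {u : ℝ → ℝ} (hu : Continuous u) {Cu : ℝ} (hub : ∀ x, |u x| ≤ Cu)
    {t : ℝ} (ht : t ∈ Set.Icc 0 T) :
    IntegrableOn (fun s => Real.exp (-lam * s) * (volK X t s * u (t - s))) (Set.Ioo 0 t) := by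
  have hCu : 0 ≤ Cu := le_trans (abs_nonneg _) (hub 0)
  apply Integrable.mono' ((rpow_int hγ t).const_mul ((M / Real.sqrt (2 * Real.pi)) * Cu))
  · exact (volK_contOn_s hXcont hu t).aestronglyMeasurable measurableSet_Ioo
  · filter_upwards [self_mem_ae_restrict measurableSet_Ioo] with s hs
    have h1 := volK_bound hT hHol ht hs
    have h2 : |Real.exp (-lam * s)| ≤ 1 := by
      rw [abs_of_pos (Real.exp_pos _), Real.exp_le_one_iff]
      nlinarith [hs.1]
    calc ‖Real.exp (-lam * s) * (volK X t s * u (t - s))‖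
        = |Real.exp (-lam * s)| * (|volK X t s| * |u (t - s)|) := by
          simp [Real.norm_eq_abs, abs_mul]
      _ ≤ 1 * (((M / Real.sqrt (2 * Real.pi)) * s ^ (γ - 3/2)) * Cu) := by
          apply mul_le_mul h2 _ (by positivity) zero_le_one
          exact mul_le_mul h1 (hub _) (abs_nonneg _) (le_trans (abs_nonneg _) h1)
      _ = (M / Real.sqrt (2 * Real.pi)) * Cu * s ^ (γ - 3/2) := by ring

theorem volK_contAt_t (hXcont : ContinuousOn X (Set.Ici 0)) {u : ℝ → ℝ} (hu : Continuous u)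
    {s t₀ : ℝ} (hs : 0 < s) (hst : s < t₀) :
    ContinuousAt (fun t => Real.exp (-lam * s) * (volK X t s * u (t - s))) t₀ := by
  have hx : ContinuousAt (fun t : ℝ => X (t - s)) t₀ := by
    have h1 : ContinuousAt X (t₀ - s) := hXcont.continuousAt (Ici_mem_nhds (by linarith))
    exact ContinuousAt.comp h1 (continuousAt_id.sub continuousAt_const)
  have hX : ContinuousAt X t₀ := hXcont.continuousAt (Ici_mem_nhds (by linarith))
  simp only [volK, heatGx, heatG, show ∀ t : ℝ, t - (t - s) = s from fun t => by ring]
  have hd : ContinuousAt (fun t : ℝ => -((X t - X (t - s)) / s)) t₀ :=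
    ((hX.sub hx).div continuousAt_const (ne_of_gt hs)).neg
  have he : ContinuousAt (fun t : ℝ => Real.exp (-(X t - X (t - s)) ^ 2 / (2 * s))) t₀ :=
    Real.continuous_exp.continuousAt.comp
      (((hX.sub hx).pow 2).neg.div continuousAt_const (by simp [ne_of_gt hs]))
  have hus : ContinuousAt (fun t : ℝ => u (t - s)) t₀ := hu.continuousAt.comp (by fun_prop)
  exact continuousAt_const.mul ((hd.mul (continuousAt_const.mul he)).mul hus)

theorem volF_ptbound (hT : 0 < T)
    (hHol : ∀ s ∈ Set.Icc (0:ℝ) T, ∀ u ∈ Set.Icc (0:ℝ) T, |X u - X s| ≤ M * |u - s| ^ γ)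
    (hlam : 0 ≤ lam) {u : ℝ → ℝ} {Cu : ℝ} (hub : ∀ x, |u x| ≤ Cu)
    {t s : ℝ} (ht : t ∈ Set.Icc 0 T) (hs : s ∈ Set.Ioo 0 t) :
    |Real.exp (-lam * s) * (volK X t s * u (t - s))| ≤
      ((M / Real.sqrt (2 * Real.pi)) * Cu) * s ^ (γ - 3/2) := by
  have hCu : 0 ≤ Cu := le_trans (abs_nonneg _) (hub 0)
  have h1 := volK_bound hT hHol ht hs
  have h2 : |Real.exp (-lam * s)| ≤ 1 := by
    rw [abs_of_pos (Real.exp_pos _), Real.exp_le_one_iff]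
    nlinarith [hs.1]
  calc |Real.exp (-lam * s) * (volK X t s * u (t - s))|
      = |Real.exp (-lam * s)| * (|volK X t s| * |u (t - s)|) := by
        simp [abs_mul]
    _ ≤ 1 * (((M / Real.sqrt (2 * Real.pi)) * s ^ (γ - 3/2)) * Cu) := by
        apply mul_le_mul h2 _ (by positivity) zero_le_one
        exact mul_le_mul h1 (hub _) (abs_nonneg _) (le_trans (abs_nonneg _) h1)
    _ = ((M / Real.sqrt (2 * Real.pi)) * Cu) * s ^ (γ - 3/2) := by ring

theorem volF_contOn (hγ : 1/2 < γ) (hT : 0 < T) (hlam : 0 ≤ lam) (hM : 0 ≤ M)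
    (hXcont : ContinuousOn X (Set.Ici 0))
    (hHol : ∀ s ∈ Set.Icc (0:ℝ) T, ∀ u ∈ Set.Icc (0:ℝ) T, |X u - X s| ≤ M * |u - s| ^ γ)
    {u : ℝ → ℝ} (hu : Continuous u) {Cu : ℝ} (hub : ∀ x, |u x| ≤ Cu) :
    ContinuousOn (volF X lam u) (Set.Icc 0 T) := by
  have hCu : 0 ≤ Cu := le_trans (abs_nonneg _) (hub 0)
  set C : ℝ := (M / Real.sqrt (2 * Real.pi)) * Cu with hC
  have hC0 : 0 ≤ C := by positivity
  set f : ℝ → ℝ → ℝ := fun t s => Real.exp (-lam * s) * (volK X t s * u (t - s)) with hf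
  set F : ℝ → ℝ → ℝ := fun t => (Set.Ioo (0:ℝ) t).indicator (f t) with hF
  have key : ∀ t ∈ Set.Icc (0:ℝ) T, volF X lam u t = ∫ s in Set.Ioo 0 T, F t s := by
    intro t ht
    rw [hF, setIntegral_indicator measurableSet_Ioo]
    rw [Set.Ioo_inter_Ioo]
    simp only [max_self, volF]
    rw [min_eq_right ht.2]
  have hmeasF : ∀ t : ℝ, AEStronglyMeasurable (F t) (volume.restrict (Set.Ioo 0 T)) := by
    intro t
    rw [hF, aestronglyMeasurable_indicator_iff measurableSet_Ioo, Measure.restrict_restrict measurableSet_Ioo]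
    exact ((volK_contOn_s hXcont hu t).mono Set.inter_subset_left).aestronglyMeasurable
      (measurableSet_Ioo.inter measurableSet_Ioo)
  apply ContinuousOn.congr _ key
  intro t₀ ht₀
  rw [ContinuousWithinAt]
  apply tendsto_integral_filter_of_dominated_convergence (fun s => C * s ^ (γ - 3/2))
  · filter_upwards with t using hmeasF t
  · filter_upwards [self_mem_nhdsWithin] with t htIcc
    filter_upwards [self_mem_ae_restrict measurableSet_Ioo] with s hsT
    by_cases hs : s ∈ Set.Ioo 0 t
    · simp only [hF, Set.indicator_of_mem hs]
      exact volF_ptbound hT hHol hlam hub htIcc hs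
    · simp only [hF, Set.indicator_of_notMem hs, norm_zero]
      have : (0:ℝ) < s := hsT.1
      positivity
  · exact ((intervalIntegral.intervalIntegrable_rpow' (a := 0) (b := T) (r := γ - 3/2)
      (by linarith)).1.mono_set Set.Ioo_subset_Ioc_self).const_mul C
  · have hne : ∀ᵐ s : ℝ ∂(volume.restrict (Set.Ioo 0 T)), s ≠ t₀ := by
      apply ae_restrict_of_ae
      rw [ae_iff]
      have : {a : ℝ | ¬a ≠ t₀} = {t₀} := by ext a; simp
      rw [this]
      exact Real.volume_singleton
    filter_upwards [self_mem_ae_restrict measurableSet_Ioo, hne] with s hsT hsne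
    rcases lt_or_gt_of_ne hsne with hlt | hgt
    · -- s < t₀ : eventually equal to the continuous function
      have hev : ∀ᶠ t in nhdsWithin t₀ (Set.Icc 0 T), F t s = f t s := by
        have : Set.Ioi s ∈ nhds t₀ := Ioi_mem_nhds hlt
        filter_upwards [mem_nhdsWithin_of_mem_nhds this] with t (htg : s < t)
        have hmem : s ∈ Set.Ioo 0 t := ⟨hsT.1, htg⟩
        simp only [hF, Set.indicator_of_mem hmem]
      have hc : Tendsto (fun t => f t s) (nhdsWithin t₀ (Set.Icc 0 T)) (nhds (f t₀ s)) :=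
        ((volK_contAt_t hXcont hu hsT.1 hlt).continuousWithinAt).tendsto
      have hFt₀ : F t₀ s = f t₀ s := by
        have hmem : s ∈ Set.Ioo 0 t₀ := ⟨hsT.1, hlt⟩
        simp only [hF, Set.indicator_of_mem hmem]
      rw [hFt₀]
      exact hc.congr' (hev.mono fun t ht => ht.symm)
    · -- s > t₀ : eventually 0
      have hFt₀ : F t₀ s = 0 := by
        have hnm : s ∉ Set.Ioo 0 t₀ := fun h => absurd h.2 (not_lt.2 hgt.le)
        simp only [hF, Set.indicator_of_notMem hnm]
      rw [hFt₀]
      have hev : ∀ᶠ t in nhdsWithin t₀ (Set.Icc 0 T), F t s = 0 := by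
        have : Set.Iio s ∈ nhds t₀ := Iio_mem_nhds hgt
        filter_upwards [mem_nhdsWithin_of_mem_nhds this] with t (htl : t < s)
        have hnm : s ∉ Set.Ioo 0 t := fun h => absurd h.2 (not_lt.2 htl.le)
        simp only [hF, Set.indicator_of_notMem hnm]
      exact tendsto_const_nhds.congr' (hev.mono fun t ht => ht.symm)

theorem Jint (hγ : 1/2 < γ) (hlam : 1 ≤ lam) :
    IntegrableOn (fun s : ℝ => s ^ (γ - 3/2) * Real.exp (-lam * s)) (Set.Ioi 0) := by
  apply Integrable.mono' (Real.GammaIntegral_convergent (s := γ - 1/2) (by linarith))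
  · apply ContinuousOn.aestronglyMeasurable _ measurableSet_Ioi
    intro s hs
    apply ContinuousWithinAt.mul
    · exact (Real.continuousAt_rpow_const s _ (Or.inl (ne_of_gt hs))).continuousWithinAt
    · exact (Real.continuous_exp.comp (continuous_const.mul continuous_id)).continuousWithinAt
  · filter_upwards [self_mem_ae_restrict measurableSet_Ioi] with s (hs : (0:ℝ) < s)
    rw [Real.norm_eq_abs, abs_mul, abs_of_nonneg (Real.rpow_nonneg hs.le _),
      abs_of_pos (Real.exp_pos _), show γ - 1/2 - 1 = γ - 3/2 by ring, mul_comm (Real.exp (-s))]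
    apply mul_le_mul_of_nonneg_left _ (Real.rpow_nonneg hs.le _)
    apply Real.exp_le_exp.2
    nlinarith

theorem Jtend (hγ : 1/2 < γ) :
    Tendsto (fun n : ℕ => ∫ s in Set.Ioi (0:ℝ), s ^ (γ - 3/2) * Real.exp (-(n:ℝ) * s))
      atTop (nhds 0) := by
  have h0 : Tendsto (fun n : ℕ => ∫ s in Set.Ioi (0:ℝ), s ^ (γ - 3/2) * Real.exp (-(n:ℝ) * s))
      atTop (nhds (∫ s in Set.Ioi (0:ℝ), (0:ℝ))) := by
    apply tendsto_integral_filter_of_dominated_convergence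
      (fun s => Real.exp (-s) * s ^ (γ - 1/2 - 1))
    · filter_upwards [eventually_ge_atTop 1] with n hn
      exact (Jint hγ (by exact_mod_cast hn)).aestronglyMeasurable
    · filter_upwards [eventually_ge_atTop 1] with n hn
      filter_upwards [self_mem_ae_restrict measurableSet_Ioi] with s (hs : (0:ℝ) < s)
      rw [Real.norm_eq_abs, abs_mul, abs_of_nonneg (Real.rpow_nonneg hs.le _),
        abs_of_pos (Real.exp_pos _), show γ - 1/2 - 1 = γ - 3/2 by ring, mul_comm (Real.exp (-s))]
      apply mul_le_mul_of_nonneg_left _ (Real.rpow_nonneg hs.le _)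
      apply Real.exp_le_exp.2
      have : (1:ℝ) ≤ (n:ℝ) := by exact_mod_cast hn
      nlinarith
    · exact Real.GammaIntegral_convergent (by linarith)
    · filter_upwards [self_mem_ae_restrict measurableSet_Ioi] with s (hs : (0:ℝ) < s)
      have he : ∀ n : ℕ, Real.exp (-(n:ℝ) * s) = (Real.exp (-s)) ^ n := by
        intro n
        rw [← Real.exp_nat_mul]
        ring_nf
      simp only [he]
      have h1 : Tendsto (fun n : ℕ => (Real.exp (-s)) ^ n) atTop (nhds 0) :=
        tendsto_pow_atTop_nhds_zero_of_lt_one (Real.exp_pos _).le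
          (by rw [Real.exp_lt_one_iff]; linarith)
      simpa using h1.const_mul (s ^ (γ - 3/2))
  simpa using h0

theorem volF_contraction (hγ : 1/2 < γ) (hT : 0 < T) (hM : 0 ≤ M) (hlam : 1 ≤ lam)
    (hXcont : ContinuousOn X (Set.Ici 0))
    (hHol : ∀ s ∈ Set.Icc (0:ℝ) T, ∀ u ∈ Set.Icc (0:ℝ) T, |X u - X s| ≤ M * |u - s| ^ γ)
    {u₁ u₂ : ℝ → ℝ} (hu₁ : Continuous u₁) (hu₂ : Continuous u₂) {C₁ C₂ D : ℝ}
    (hb₁ : ∀ x, |u₁ x| ≤ C₁) (hb₂ : ∀ x, |u₂ x| ≤ C₂)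
    (hD : ∀ x, |u₁ x - u₂ x| ≤ D) {t : ℝ} (ht : t ∈ Set.Icc 0 T) :
    |volF X lam u₁ t - volF X lam u₂ t| ≤
      (M / Real.sqrt (2 * Real.pi)) *
        (∫ s in Set.Ioi (0:ℝ), s ^ (γ - 3/2) * Real.exp (-lam * s)) * D := by
  have hD0 : 0 ≤ D := le_trans (abs_nonneg _) (hD 0)
  have hlam0 : 0 ≤ lam := by linarith
  set C0 : ℝ := M / Real.sqrt (2 * Real.pi) with hC0
  have hC0n : 0 ≤ C0 := by positivity
  have hi₁ := volF_integrable hγ hT hlam0 hXcont hHol hu₁ hb₁ ht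
  have hi₂ := volF_integrable hγ hT hlam0 hXcont hHol hu₂ hb₂ ht
  have hsub : volF X lam u₁ t - volF X lam u₂ t =
      ∫ s in Set.Ioo 0 t, Real.exp (-lam * s) * (volK X t s * (u₁ (t-s) - u₂ (t-s))) := by
    rw [volF, volF, ← integral_sub hi₁ hi₂]
    congr 1; ext s; ring
  rw [hsub, ← Real.norm_eq_abs]
  have hJpos : IntegrableOn (fun s : ℝ => s ^ (γ - 3/2) * Real.exp (-lam * s)) (Set.Ioo 0 t) :=
    (Jint hγ hlam).mono_set Set.Ioo_subset_Ioi_self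
  calc ‖∫ s in Set.Ioo 0 t, Real.exp (-lam * s) * (volK X t s * (u₁ (t-s) - u₂ (t-s)))‖
      ≤ ∫ s in Set.Ioo 0 t, (C0 * D) * (s ^ (γ - 3/2) * Real.exp (-lam * s)) := by
        apply norm_integral_le_of_norm_le (hJpos.const_mul (C0 * D))
        filter_upwards [self_mem_ae_restrict measurableSet_Ioo] with s hs
        have hk := volK_bound hT hHol ht hs
        have hE : |Real.exp (-lam * s)| = Real.exp (-lam * s) := abs_of_pos (Real.exp_pos _)
        rw [Real.norm_eq_abs, abs_mul, abs_mul, hE]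
        calc Real.exp (-lam * s) * (|volK X t s| * |u₁ (t-s) - u₂ (t-s)|)
            ≤ Real.exp (-lam * s) * ((C0 * s ^ (γ - 3/2)) * D) := by
              apply mul_le_mul_of_nonneg_left _ (Real.exp_pos _).le
              exact mul_le_mul hk (hD _) (abs_nonneg _) (le_trans (abs_nonneg _) hk)
          _ = (C0 * D) * (s ^ (γ - 3/2) * Real.exp (-lam * s)) := by ring
    _ = (C0 * D) * ∫ s in Set.Ioo 0 t, s ^ (γ - 3/2) * Real.exp (-lam * s) := by
        rw [MeasureTheory.integral_const_mul]
    _ ≤ (C0 * D) * ∫ s in Set.Ioi 0, s ^ (γ - 3/2) * Real.exp (-lam * s) := by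
        apply mul_le_mul_of_nonneg_left _ (by positivity)
        apply setIntegral_mono_set (Jint hγ hlam)
        · filter_upwards [self_mem_ae_restrict measurableSet_Ioi] with s (hs : (0:ℝ) < s)
          positivity
        · exact HasSubset.Subset.eventuallyLE Set.Ioo_subset_Ioi_self
    _ = C0 * (∫ s in Set.Ioi (0:ℝ), s ^ (γ - 3/2) * Real.exp (-lam * s)) * D := by ring

theorem heatGx_zero (x ξ : ℝ) : heatGx x 0 ξ 0 = 0 := by
  simp [heatGx, heatG]

theorem gcont (hX0 : X 0 = 0) (hXcont : ContinuousOn X (Set.Ici 0)) {r₀ : ℝ} (hr₀ : r₀ < 0)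
    (hT : 0 < T) :
    ContinuousOn (fun t => -heatGx (X t) t r₀ 0) (Set.Icc 0 T) := by
  intro t₀ ht₀
  rcases eq_or_lt_of_le ht₀.1 with h0 | h0
  · -- t₀ = 0
    rw [← h0, ContinuousWithinAt]
    have hval : -heatGx (X 0) 0 r₀ 0 = 0 := by rw [heatGx_zero]; ring
    rw [hval]
    have hsub : Set.Icc (0:ℝ) T ⊆ insert 0 (Set.Ioi 0) := by
      intro x hx
      rcases eq_or_lt_of_le hx.1 with h | h
      · exact Or.inl h.symm
      · exact Or.inr h
    apply Tendsto.mono_left _ (nhdsWithin_mono 0 hsub)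
    rw [nhdsWithin_insert, tendsto_sup]
    constructor
    · have := tendsto_pure_nhds (fun t => -heatGx (X t) t r₀ 0) 0
      rwa [hval] at this
    · have := (gtend X hX0 hXcont r₀ hr₀).neg
      rwa [neg_zero] at this
  · -- t₀ > 0
    apply ContinuousAt.continuousWithinAt
    have hX : ContinuousAt X t₀ := hXcont.continuousAt (Ici_mem_nhds h0)
    simp only [heatGx, heatG, sub_zero]
    have hd : ContinuousAt (fun t : ℝ => -((X t - r₀) / t)) t₀ :=
      ((hX.sub continuousAt_const).div continuousAt_id (ne_of_gt h0)).neg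
    have hsq : ContinuousAt (fun t : ℝ => (Real.sqrt (2 * Real.pi * t))⁻¹) t₀ := by
      apply ContinuousAt.inv₀
      · exact (Real.continuous_sqrt.comp (continuous_const.mul continuous_id)).continuousAt
      · exact ne_of_gt (Real.sqrt_pos.2 (by have := Real.pi_pos; nlinarith))
    have he : ContinuousAt (fun t : ℝ => Real.exp (-(X t - r₀) ^ 2 / (2 * t))) t₀ :=
      Real.continuous_exp.continuousAt.comp
        (((hX.sub continuousAt_const).pow 2).neg.div (continuous_const.mul continuous_id).continuousAt
          (by simp [ne_of_gt h0]))
    exact (hd.mul (hsq.mul he)).neg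

theorem soloT (X : ℝ → ℝ) (γ : ℝ) (hγ : 1/2 < γ ∧ γ ≤ 1) (hX0 : X 0 = 0)
    (hXcont : ContinuousOn X (Set.Ici 0))
    (hHolder : ∀ T > (0:ℝ), ∃ m : ℝ, ∀ s ∈ Set.Icc (0:ℝ) T, ∀ u ∈ Set.Icc (0:ℝ) T,
      |X u - X s| ≤ m * |u - s| ^ γ)
    (r₀ : ℝ) (hr₀ : r₀ < 0) (T : ℝ) (hT : 0 < T) :
    ∃ u : ℝ → ℝ,
      (ContinuousOn u (Set.Icc 0 T) ∧ u 0 = 0 ∧ ∀ t ∈ Set.Ioc (0:ℝ) T,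
        u t = -heatGx (X t) t r₀ 0 + ∫ τ in Set.Ioo 0 t, heatGx (X t) t (X τ) τ * u τ) ∧
      ∀ v : ℝ → ℝ,
        (ContinuousOn v (Set.Icc 0 T) ∧ v 0 = 0 ∧ ∀ t ∈ Set.Ioc (0:ℝ) T,
          v t = -heatGx (X t) t r₀ 0 + ∫ τ in Set.Ioo 0 t, heatGx (X t) t (X τ) τ * v τ) →
        ∀ t ∈ Set.Icc (0:ℝ) T, v t = u t := by
  obtain ⟨m, hm⟩ := hHolder T hT
  set M : ℝ := max m 0 with hMdef
  have hM : 0 ≤ M := le_max_right m 0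
  have hHol : ∀ s ∈ Set.Icc (0:ℝ) T, ∀ u ∈ Set.Icc (0:ℝ) T, |X u - X s| ≤ M * |u - s| ^ γ := by
    intro s hs u hu
    exact (hm s hs u hu).trans
      (mul_le_mul_of_nonneg_right (le_max_left m 0) (Real.rpow_nonneg (abs_nonneg _) γ))
  set C0 : ℝ := M / Real.sqrt (2 * Real.pi) with hC0def
  have hC0 : 0 ≤ C0 := by positivity
  -- choose lam
  have hεpos : (0:ℝ) < (1/2) / (C0 + 1) := by positivity
  obtain ⟨n, hn1, hn2⟩ : ∃ n : ℕ, 1 ≤ n ∧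
      (∫ s in Set.Ioi (0:ℝ), s ^ (γ - 3/2) * Real.exp (-(n:ℝ) * s)) < (1/2) / (C0 + 1) := by
    have h1 := (Jtend (γ := γ) hγ.1).eventually_lt_const hεpos
    obtain ⟨n, hn⟩ := (eventually_ge_atTop 1).and h1 |>.exists
    exact ⟨n, hn.1, hn.2⟩
  set lam : ℝ := (n : ℝ) with hlamdef
  have hlam1 : 1 ≤ lam := by simp only [hlamdef]; exact_mod_cast hn1
  have hlam0 : 0 ≤ lam := by linarith
  set Jv : ℝ := ∫ s in Set.Ioi (0:ℝ), s ^ (γ - 3/2) * Real.exp (-lam * s) with hJdef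
  have hc : C0 * Jv < 1/2 := by
    calc C0 * Jv ≤ C0 * ((1/2) / (C0 + 1)) :=
          mul_le_mul_of_nonneg_left hn2.le hC0
      _ < 1/2 := by
          rw [mul_div_assoc']
          rw [div_lt_iff₀ (by positivity)]
          nlinarith
  set g : ℝ → ℝ := fun t => -heatGx (X t) t r₀ 0 with hgdef
  have hg0 : g 0 = 0 := by rw [hgdef]; simp only [heatGx_zero]; ring
  have hgc : ContinuousOn g (Set.Icc 0 T) := gcont hX0 hXcont hr₀ hT
  set I : Set ℝ := Set.Icc 0 T with hIdef
  haveI : Nonempty I := ⟨⟨0, le_refl 0, hT.le⟩⟩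
  -- the operator
  have hVcont : ∀ v : C(I, ℝ), Continuous (Set.IccExtend hT.le v) := fun v =>
    v.continuous.Icc_extend'
  have hVbd : ∀ v : C(I, ℝ), ∀ x : ℝ, |Set.IccExtend hT.le v x| ≤ ‖v‖ := by
    intro v x
    rw [Set.IccExtend_apply, ← Real.norm_eq_abs]
    exact v.norm_coe_le_norm _
  have mkcont : ∀ v : C(I, ℝ), ContinuousOn
      (fun t => Real.exp (-lam * t) * g t + volF X lam (Set.IccExtend hT.le v) t) I := by
    intro v
    exact (((Real.continuous_exp.comp (continuous_const.mul continuous_id)).continuousOn).mul hgc).add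
      (volF_contOn hγ.1 hT hlam0 hM hXcont hHol (hVcont v) (hVbd v))
  set Phi : C(I, ℝ) → C(I, ℝ) := fun v =>
    ContinuousMap.mk (I.restrict (fun t => Real.exp (-lam * t) * g t +
      volF X lam (Set.IccExtend hT.le v) t)) (mkcont v).restrict with hPhidef
  have hPhiapp : ∀ v : C(I, ℝ), ∀ x : I, Phi v x =
      Real.exp (-lam * (x:ℝ)) * g x + volF X lam (Set.IccExtend hT.le v) x := fun v x => rfl
  -- contraction
  have hcontr : ContractingWith (1/2 : NNReal) Phi := by
    constructor
    · norm_num [← NNReal.coe_lt_coe]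
    · apply LipschitzWith.of_dist_le_mul
      intro v w
      have h2 : (0:ℝ) ≤ ((1/2 : NNReal) : ℝ) * dist v w := by positivity
      rw [ContinuousMap.dist_le h2]
      intro x
      rw [hPhiapp, hPhiapp, Real.dist_eq]
      have hD : ∀ y : ℝ, |Set.IccExtend hT.le v y - Set.IccExtend hT.le w y| ≤ dist v w := by
        intro y
        rw [Set.IccExtend_apply, Set.IccExtend_apply, ← Real.dist_eq]
        exact ContinuousMap.dist_apply_le_dist _
      have hsimp : Real.exp (-lam * (x:ℝ)) * g x + volF X lam (Set.IccExtend hT.le v) x -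
          (Real.exp (-lam * (x:ℝ)) * g x + volF X lam (Set.IccExtend hT.le w) x) =
          volF X lam (Set.IccExtend hT.le v) x - volF X lam (Set.IccExtend hT.le w) x := by ring
      rw [hsimp]
      have hb := volF_contraction hγ.1 hT hM hlam1 hXcont hHol (hVcont v) (hVcont w)
        (hVbd v) (hVbd w) hD x.2
      calc |volF X lam (Set.IccExtend hT.le v) (x:ℝ) - volF X lam (Set.IccExtend hT.le w) (x:ℝ)|
          ≤ C0 * Jv * dist v w := hb
        _ ≤ (1/2) * dist v w := mul_le_mul_of_nonneg_right hc.le dist_nonneg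
        _ = ((1/2 : NNReal) : ℝ) * dist v w := by norm_num
  set v₀ : C(I, ℝ) := ContractingWith.fixedPoint Phi hcontr with hv₀def
  have hfix : Phi v₀ = v₀ := hcontr.fixedPoint_isFixedPt
  set V : ℝ → ℝ := Set.IccExtend hT.le v₀ with hVdef
  have hVmem : ∀ y : ℝ, (hy : y ∈ I) → V y = v₀ ⟨y, hy⟩ := fun y hy => Set.IccExtend_of_mem _ _ hy
  have h0mem : (0:ℝ) ∈ I := ⟨le_refl 0, hT.le⟩
  -- value at zero
  have hv₀0 : v₀ ⟨0, h0mem⟩ = 0 := by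
    have h := ContinuousMap.congr_fun hfix ⟨0, h0mem⟩
    rw [hPhiapp] at h
    rw [← h]
    simp [volF, Set.Ioo_self, hg0]
  set u : ℝ → ℝ := fun t => Real.exp (lam * t) * V t with hudef
  have hucont : Continuous u := (Real.continuous_exp.comp (continuous_const.mul continuous_id)).mul (hVcont v₀)
  have hu0 : u 0 = 0 := by
    simp only [hudef]
    rw [hVmem 0 h0mem, hv₀0]
    ring
  -- the equation
  have hueq : ∀ t ∈ Set.Ioc (0:ℝ) T, u t = -heatGx (X t) t r₀ 0 +
      ∫ τ in Set.Ioo 0 t, heatGx (X t) t (X τ) τ * u τ := by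
    intro t ht
    have htI : t ∈ I := ⟨ht.1.le, ht.2⟩
    have h := ContinuousMap.congr_fun hfix ⟨t, htI⟩
    rw [hPhiapp] at h
    have hut : u t = Real.exp (lam * t) * v₀ ⟨t, htI⟩ := by
      show Real.exp (lam * t) * V t = _
      rw [hVmem t htI]
    have heq2 : u t = Real.exp (lam * t) * (Real.exp (-lam * t) * g t + volF X lam V t) := by
      rw [hut, h]
    have hexpc : Real.exp (lam * t) * Real.exp (-lam * t) = 1 := by
      rw [← Real.exp_add]; ring_nf; exact Real.exp_zero
    have heq3 : u t = g t + Real.exp (lam * t) * volF X lam V t := by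
      rw [heq2, mul_add, ← mul_assoc, hexpc, one_mul]
    -- transform the integral
    have hint : Real.exp (lam * t) * volF X lam V t =
        ∫ τ in Set.Ioo 0 t, heatGx (X t) t (X τ) τ * u τ := by
      rw [volF, ← MeasureTheory.integral_const_mul]
      rw [cov (fun τ => heatGx (X t) t (X τ) τ * u τ) t ht.1]
      apply setIntegral_congr_fun measurableSet_Ioo
      intro s hs
      show Real.exp (lam * t) * (Real.exp (-lam * s) * (heatGx (X t) t (X (t - s)) (t - s) * V (t - s))) =
        heatGx (X t) t (X (t - s)) (t - s) * (Real.exp (lam * (t - s)) * V (t - s))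
      have hee : Real.exp (lam * t) * Real.exp (-lam * s) = Real.exp (lam * (t - s)) := by
        rw [← Real.exp_add, show lam * t + -lam * s = lam * (t - s) by ring]
      linear_combination (heatGx (X t) t (X (t - s)) (t - s) * V (t - s)) * hee
    rw [heq3, hint, hgdef]
  refine ⟨u, ⟨hucont.continuousOn, hu0, hueq⟩, ?_⟩
  -- uniqueness
  rintro q ⟨hqc, hq0, hqeq⟩
  have hwcont : Continuous (I.restrict (fun t => Real.exp (-lam * t) * q t)) := by
    apply ContinuousOn.restrict
    exact ((Real.continuous_exp.comp (continuous_const.mul continuous_id)).continuousOn).mul hqc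
  set w : C(I, ℝ) := ContinuousMap.mk _ hwcont with hwdef
  have hwapp : ∀ y : I, w y = Real.exp (-lam * (y:ℝ)) * q y := fun y => rfl
  have hWmem : ∀ y : ℝ, (hy : y ∈ I) → Set.IccExtend hT.le w y = Real.exp (-lam * y) * q y := by
    intro y hy
    rw [Set.IccExtend_of_mem _ _ hy, hwapp]
  have hwfix : Phi w = w := by
    apply ContinuousMap.ext
    rintro ⟨t, htI⟩
    rw [hPhiapp, hwapp]
    simp only
    rcases eq_or_lt_of_le htI.1 with h0' | h0'
    · rw [← h0']
      simp [volF, Set.Ioo_self, hg0, hq0]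
    · -- t > 0
      have hvolf : volF X lam (Set.IccExtend hT.le w) t =
          Real.exp (-lam * t) * ∫ τ in Set.Ioo 0 t, heatGx (X t) t (X τ) τ * q τ := by
        rw [volF, cov (fun τ => heatGx (X t) t (X τ) τ * q τ) t h0', ← MeasureTheory.integral_const_mul]
        apply setIntegral_congr_fun measurableSet_Ioo
        intro s hs
        have hmem : t - s ∈ I := ⟨by linarith [hs.1, hs.2], by linarith [htI.2, hs.1]⟩
        show Real.exp (-lam * s) * (volK X t s * Set.IccExtend hT.le w (t - s)) =
          Real.exp (-lam * t) * (heatGx (X t) t (X (t - s)) (t - s) * q (t - s))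
        rw [hWmem (t - s) hmem, volK, ← mul_assoc, ← mul_assoc]
        rw [show Real.exp (-lam * s) * heatGx (X t) t (X (t-s)) (t-s) * Real.exp (-lam * (t-s)) =
          (Real.exp (-lam * s) * Real.exp (-lam * (t-s))) * heatGx (X t) t (X (t-s)) (t-s) by ring]
        rw [← Real.exp_add, show -lam * s + -lam * (t - s) = -lam * t by ring]
        ring
      rw [hvolf]
      have hqt := hqeq t ⟨h0', htI.2⟩
      rw [hgdef]
      simp only
      linear_combination -(Real.exp (-lam * t)) * hqt
  have hwv : w = v₀ := hcontr.fixedPoint_unique hwfix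
  intro t htI
  have h1 : Real.exp (-lam * t) * q t = v₀ ⟨t, htI⟩ := by
    rw [← hwv, hwapp ⟨t, htI⟩]
  have h2 : u t = Real.exp (lam * t) * v₀ ⟨t, htI⟩ := by
    show Real.exp (lam * t) * V t = _
    rw [hVmem t htI]
  rw [h2, ← h1, ← mul_assoc, ← Real.exp_add]
  rw [show lam * t + -lam * t = 0 by ring, Real.exp_zero, one_mul]

end core

/-- For X locally Hölder with exponent γ ∈ (1/2,1], X 0 = 0 and
r₀ < 0, there is a unique continuous p : [0,∞) → ℝ with p 0 = 0 satisfying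
p(t) = −∂_x G(X_t,t;r₀,0) + ∫₀ᵗ ∂_x G(X_t,t;X_τ,τ) p(τ) dτ for all t > 0. -/
theorem volterra_existence_uniqueness (X : ℝ → ℝ) (γ : ℝ)
    (hγ : 1 / 2 < γ ∧ γ ≤ 1) (hX0 : X 0 = 0)
    (hXcont : ContinuousOn X (Set.Ici 0))
    (hHolder : ∀ T > (0:ℝ), ∃ m : ℝ, ∀ s ∈ Set.Icc (0:ℝ) T, ∀ u ∈ Set.Icc (0:ℝ) T,
      |X u - X s| ≤ m * |u - s| ^ γ)
    (r₀ : ℝ) (hr₀ : r₀ < 0) :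
    ∃ p : ℝ → ℝ,
      (ContinuousOn p (Set.Ici 0) ∧ p 0 = 0 ∧ ∀ t > (0:ℝ),
        p t = -heatGx (X t) t r₀ 0 +
          ∫ τ in Set.Ioo 0 t, heatGx (X t) t (X τ) τ * p τ) ∧
      ∀ q : ℝ → ℝ,
        (ContinuousOn q (Set.Ici 0) ∧ q 0 = 0 ∧ ∀ t > (0:ℝ),
          q t = -heatGx (X t) t r₀ 0 +
            ∫ τ in Set.Ioo 0 t, heatGx (X t) t (X τ) τ * q τ) →
        ∀ t ≥ (0:ℝ), q t = p t := by
  have hγ' : (1:ℝ)/2 < γ := by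
    have := hγ.1; linarith
  have key := fun (T : ℝ) (hT : 0 < T) =>
    soloT X γ ⟨hγ', hγ.2⟩ hX0 hXcont hHolder r₀ hr₀ T hT
  set P : ℝ → ℝ → ℝ := fun T => if hT : 0 < T then (key T hT).choose else fun _ => 0 with hPdef
  have hPprop : ∀ T, ∀ hT : 0 < T,
      (ContinuousOn (P T) (Set.Icc 0 T) ∧ P T 0 = 0 ∧ ∀ t ∈ Set.Ioc (0:ℝ) T,
        P T t = -heatGx (X t) t r₀ 0 + ∫ τ in Set.Ioo 0 t, heatGx (X t) t (X τ) τ * P T τ) ∧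
      ∀ v : ℝ → ℝ,
        (ContinuousOn v (Set.Icc 0 T) ∧ v 0 = 0 ∧ ∀ t ∈ Set.Ioc (0:ℝ) T,
          v t = -heatGx (X t) t r₀ 0 + ∫ τ in Set.Ioo 0 t, heatGx (X t) t (X τ) τ * v τ) →
        ∀ t ∈ Set.Icc (0:ℝ) T, v t = P T t := by
    intro T hT
    simp only [hPdef, dif_pos hT]
    exact (key T hT).choose_spec
  have hagree : ∀ T₁ T₂, 0 < T₁ → T₁ ≤ T₂ → ∀ t ∈ Set.Icc (0:ℝ) T₁, P T₂ t = P T₁ t := by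
    intro T₁ T₂ h1 hle
    have h2 : 0 < T₂ := lt_of_lt_of_le h1 hle
    apply (hPprop T₁ h1).2 (P T₂)
    refine ⟨(hPprop T₂ h2).1.1.mono (Set.Icc_subset_Icc_right hle), (hPprop T₂ h2).1.2.1, ?_⟩
    intro t ht
    exact (hPprop T₂ h2).1.2.2 t (Set.Ioc_subset_Ioc_right hle ht)
  set p : ℝ → ℝ := fun t => if 0 ≤ t then P (t+1) t else 0 with hpdef
  have hpP : ∀ t T : ℝ, 0 ≤ t → t ≤ T → 0 < T → p t = P T t := by
    intro t T ht htT hT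
    have hp1 : p t = P (t+1) t := by simp only [hpdef, if_pos ht]
    rcases le_total T (t+1) with hc | hc
    · rw [hp1, hagree T (t+1) hT hc t ⟨ht, htT⟩]
    · rw [hp1, hagree (t+1) T (by linarith) hc t ⟨ht, by linarith⟩]
  have hp0 : p 0 = 0 := by
    rw [hpP 0 1 le_rfl zero_le_one one_pos]
    exact (hPprop 1 one_pos).1.2.1
  have hpcont : ContinuousOn p (Set.Ici 0) := by
    intro t₀ ht₀
    have ht₀' : (0:ℝ) ≤ t₀ := ht₀
    set T : ℝ := t₀ + 1 with hTdef
    have hTpos : 0 < T := by linarith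
    have cw : ContinuousWithinAt (P T) (Set.Icc 0 T) t₀ :=
      (hPprop T hTpos).1.1 t₀ ⟨ht₀', by linarith⟩
    have hsub : Set.Ici (0:ℝ) ∩ Set.Iio T ⊆ Set.Icc 0 T := by
      intro x hx; exact ⟨hx.1, le_of_lt hx.2⟩
    have cw2 : ContinuousWithinAt (P T) (Set.Ici 0 ∩ Set.Iio T) t₀ := cw.mono hsub
    have heq : ∀ x ∈ Set.Ici (0:ℝ) ∩ Set.Iio T, p x = P T x := by
      intro x hx
      exact hpP x T hx.1 (le_of_lt hx.2) hTpos
    have cw3 : ContinuousWithinAt p (Set.Ici 0 ∩ Set.Iio T) t₀ := by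
      apply cw2.congr heq
      exact hpP t₀ T ht₀' (by linarith) hTpos
    rw [ContinuousWithinAt] at cw3 ⊢
    rwa [nhdsWithin_restrict' (Set.Ici 0) (Iio_mem_nhds (by linarith : t₀ < T))]
  have hpeq : ∀ t > (0:ℝ), p t = -heatGx (X t) t r₀ 0 +
      ∫ τ in Set.Ioo 0 t, heatGx (X t) t (X τ) τ * p τ := by
    intro t ht
    set T : ℝ := t + 1 with hTdef
    have hTpos : 0 < T := by linarith
    have h1 : p t = P T t := hpP t T ht.le (by linarith) hTpos
    have h2 := (hPprop T hTpos).1.2.2 t ⟨ht, by linarith⟩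
    rw [h1, h2]
    congr 1
    apply setIntegral_congr_fun measurableSet_Ioo
    intro τ hτ
    simp only
    rw [hpP τ T hτ.1.le (by linarith [hτ.2]) hTpos]
  refine ⟨p, ⟨hpcont, hp0, hpeq⟩, ?_⟩
  rintro q ⟨hqc, hq0, hqe⟩ t ht
  rcases eq_or_lt_of_le ht with h0 | h0
  · rw [← h0, hq0, hp0]
  · set T : ℝ := t + 1 with hTdef
    have hTpos : 0 < T := by linarith
    have hq' : ∀ s ∈ Set.Ioc (0:ℝ) T, q s = -heatGx (X s) s r₀ 0 +
        ∫ τ in Set.Ioo 0 s, heatGx (X s) s (X τ) τ * q τ := fun s hs => hqe s hs.1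
    have := (hPprop T hTpos).2 q
      ⟨hqc.mono (fun x hx => hx.1), hq0, hq'⟩ t ⟨ht, by linarith⟩
    rw [this, ← hpP t T ht (by linarith) hTpos]
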